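/- arXiv:1303.5509 — 2 statements merged into one kernel-verified Lean document; each statement's English description precedes it below -/
import Mathlib

section
/- Let q be a prime power. The subgroup of PGL(3,q³) consisting of the homographies of PG(2,q³) that stabilize the line ℓ∞ acts transitively on the set of all tangent splashes of ℓ∞. -/
namespace TangentSplashPaper

open Projectivization

/-- The point set of the projective plane `PG(2,K)`. -/
abbrev PGPoint (K : Type*) [Field K] := Projectivization K (Fin 3 → K)

/-- `ℓ` is a line of `PG(2,K)`: the set of points lying in a fixed
2-dimensional linear subspace. -/
def IsLine {K : Type*} [Field K] (ℓ : Set (PGPoint K)) : Prop :=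
  ∃ W : Submodule K (Fin 3 → K), Module.finrank K W = 2 ∧
    ℓ = {P : PGPoint K | P.submodule ≤ W}

/-- The distinguished line `ℓ∞` of `PG(2,K)`: points whose last homogeneous
coordinate vanishes. -/
def linf (K : Type*) [Field K] : Set (PGPoint K) := {P : PGPoint K | P.rep 2 = 0}

/-- The homography of `PG(2,K)` induced by a linear automorphism of `K³`;
as maps of point sets, these are exactly the elements of `PGL(3,K)`. -/
def hmap {K : Type*} [Field K] (f : (Fin 3 → K) ≃ₗ[K] (Fin 3 → K)) :
    PGPoint K → PGPoint K :=
  Projectivization.map f.toLinearMap f.injective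

/-- The base subplane `PG(2,F)`: points admitting homogeneous coordinates in
the subfield `F`. -/
def basePlane (F K : Type*) [Field F] [Field K] [Algebra F K] : Set (PGPoint K) :=
  {P : PGPoint K | ∃ v : Fin 3 → K, ∃ hv : v ≠ 0, P = Projectivization.mk K v hv ∧
    ∀ i, v i ∈ (algebraMap F K).range}

/-- An order-`q`-subplane of `PG(2,K)` (`q = |F|`): an image of `PG(2,F)`
under a homography. -/
def IsSubplane (F : Type*) {K : Type*} [Field F] [Field K] [Algebra F K]
    (S : Set (PGPoint K)) : Prop :=
  ∃ f : (Fin 3 → K) ≃ₗ[K] (Fin 3 → K), S = hmap f '' basePlane F K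

/-- An order-`q`-subline of `PG(2,K)`: the intersection of an order-`q`-subplane
with a line of `PG(2,K)` meeting it in `q+1` points. -/
def IsSubline (F : Type*) {K : Type*} [Field F] [Field K] [Algebra F K] (q : ℕ)
    (b : Set (PGPoint K)) : Prop :=
  ∃ S ℓ : Set (PGPoint K), IsSubplane F S ∧ IsLine ℓ ∧
    (S ∩ ℓ).ncard = q + 1 ∧ b = S ∩ ℓ

/-- The splash of a subplane `π` on `ℓ∞`: all points of `ℓ∞` lying on a line
of `PG(2,K)` spanned by two points of `π`. -/
def splash {K : Type*} [Field K] (π : Set (PGPoint K)) : Set (PGPoint K) :=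
  {X : PGPoint K | X ∈ linf K ∧ ∃ P Q : PGPoint K, P ∈ π ∧ Q ∈ π ∧ P ≠ Q ∧
    ∃ ℓ : Set (PGPoint K), IsLine ℓ ∧ P ∈ ℓ ∧ Q ∈ ℓ ∧ X ∈ ℓ}

/-- `S` is a tangent splash of `ℓ∞` with centre `T`: `S` is the splash of some
order-`q`-subplane meeting `ℓ∞` exactly in the point `T`. -/
def IsTangentSplash (F : Type*) {K : Type*} [Field F] [Field K] [Algebra F K]
    (S : Set (PGPoint K)) (T : PGPoint K) : Prop :=
  ∃ π : Set (PGPoint K), IsSubplane F π ∧ π ∩ linf K = {T} ∧ S = splash π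

/-- The set `t_P`: points of `ℓ∞` lying on the extension of a line of the
subplane `π` through the point `P` (lines of `π` are the lines of `PG(2,K)`
meeting `π` in `q+1` points). -/
def pencilTrace {K : Type*} [Field K] (q : ℕ) (π : Set (PGPoint K))
    (P : PGPoint K) : Set (PGPoint K) :=
  {X : PGPoint K | X ∈ linf K ∧ ∃ ℓ : Set (PGPoint K), IsLine ℓ ∧ P ∈ ℓ ∧
    (π ∩ ℓ).ncard = q + 1 ∧ X ∈ ℓ}

variable {K : Type*} [Field K]

lemma mk_congr {v w : Fin 3 → K} (hv : v ≠ 0) (hw : w ≠ 0) (h : v = w) :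
    Projectivization.mk K v hv = Projectivization.mk K w hw := by subst h; rfl

lemma hmap_mk (f : (Fin 3 → K) ≃ₗ[K] (Fin 3 → K)) (v : Fin 3 → K) (hv : v ≠ 0)
    (hfv : f v ≠ 0) :
    hmap f (Projectivization.mk K v hv) = Projectivization.mk K (f v) hfv :=
  Projectivization.map_mk f.toLinearMap f.injective v hv

lemma map_ne (f : (Fin 3 → K) ≃ₗ[K] (Fin 3 → K)) {v : Fin 3 → K} (hv : v ≠ 0) : f v ≠ 0 := by
  simpa using hv

lemma hmap_hmap (u w : (Fin 3 → K) ≃ₗ[K] (Fin 3 → K)) (P : PGPoint K) :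
    hmap w (hmap u P) = hmap (u ≪≫ₗ w) P := by
  conv_lhs => rw [← mk_rep P]
  conv_rhs => rw [← mk_rep P]
  rw [hmap_mk u _ _ (map_ne u P.rep_nonzero),
    hmap_mk w _ _ (map_ne w (map_ne u P.rep_nonzero)),
    hmap_mk _ _ _ (map_ne _ P.rep_nonzero)]
  exact mk_congr _ _ rfl

lemma hmap_symm_apply (f : (Fin 3 → K) ≃ₗ[K] (Fin 3 → K)) (P : PGPoint K) :
    hmap f.symm (hmap f P) = P := by
  rw [hmap_hmap]
  conv_lhs => rw [← mk_rep P]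
  rw [hmap_mk _ _ _ (map_ne _ P.rep_nonzero)]
  conv_rhs => rw [← mk_rep P]
  exact mk_congr _ _ (by simp)

lemma hmap_injective (f : (Fin 3 → K) ≃ₗ[K] (Fin 3 → K)) : Function.Injective (hmap f) := by
  intro P Q h
  have := congrArg (hmap f.symm) h
  rwa [hmap_symm_apply, hmap_symm_apply] at this

lemma mem_linf_mk {v : Fin 3 → K} (hv : v ≠ 0) :
    Projectivization.mk K v hv ∈ linf K ↔ v 2 = 0 := by
  obtain ⟨a, ha⟩ := (mk_eq_mk_iff K _ _ _ hv).mp (mk_rep (Projectivization.mk K v hv))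
  have h2 : (Projectivization.mk K v hv).rep 2 = (a : K) * v 2 := by
    rw [← ha]; rfl
  constructor
  · intro h
    have hh : (Projectivization.mk K v hv).rep 2 = 0 := h
    have := h2 ▸ hh
    rcases mul_eq_zero.mp this with h' | h'
    · exact absurd h' a.ne_zero
    · exact h'
  · intro h
    show (Projectivization.mk K v hv).rep 2 = 0
    rw [h2, h, mul_zero]

lemma mk_mem_line {W : Submodule K (Fin 3 → K)} {v : Fin 3 → K} (hv : v ≠ 0) :
    Projectivization.mk K v hv ∈ {P : PGPoint K | P.submodule ≤ W} ↔ v ∈ W := by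
  rw [Set.mem_setOf_eq, submodule_mk, Submodule.span_singleton_le_iff_mem]

lemma image_line (f : (Fin 3 → K) ≃ₗ[K] (Fin 3 → K)) (W : Submodule K (Fin 3 → K)) :
    hmap f '' {P : PGPoint K | P.submodule ≤ W}
      = {P : PGPoint K | P.submodule ≤ W.map f.toLinearMap} := by
  ext Q
  constructor
  · rintro ⟨P, hP, rfl⟩
    rw [← mk_rep P] at hP ⊢
    rw [mk_mem_line] at hP
    rw [hmap_mk _ _ _ (map_ne _ P.rep_nonzero), mk_mem_line]
    exact Submodule.mem_map_of_mem hP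
  · intro hQ
    rw [← mk_rep Q, mk_mem_line] at hQ
    obtain ⟨w, hw, hweq⟩ := hQ
    have hwne : w ≠ 0 := by
      intro h; subst h; simp only [map_zero] at hweq
      exact Q.rep_nonzero hweq.symm
    refine ⟨Projectivization.mk K w hwne, (mk_mem_line hwne).mpr hw, ?_⟩
    rw [hmap_mk _ _ _ (map_ne _ hwne)]
    conv_rhs => rw [← mk_rep Q]
    exact mk_congr _ _ hweq

lemma isLine_image (f : (Fin 3 → K) ≃ₗ[K] (Fin 3 → K)) {ℓ : Set (PGPoint K)}
    (h : IsLine ℓ) : IsLine (hmap f '' ℓ) := by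
  obtain ⟨W, h2, rfl⟩ := h
  exact ⟨W.map f.toLinearMap, by rw [LinearEquiv.finrank_map_eq f W]; exact h2,
    (image_line f W).symm ▸ rfl⟩


lemma splash_image_subset (f : (Fin 3 → K) ≃ₗ[K] (Fin 3 → K))
    (hl : ∀ X ∈ linf K, hmap f X ∈ linf K) (π : Set (PGPoint K)) :
    hmap f '' splash π ⊆ splash (hmap f '' π) := by
  rintro _ ⟨Y, ⟨hYl, P, Q, hP, hQ, hPQ, ℓ, hℓ, hPℓ, hQℓ, hYℓ⟩, rfl⟩
  exact ⟨hl Y hYl, hmap f P, hmap f Q, ⟨P, hP, rfl⟩, ⟨Q, hQ, rfl⟩,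
    fun h => hPQ (hmap_injective f h), hmap f '' ℓ, isLine_image f hℓ,
    ⟨P, hPℓ, rfl⟩, ⟨Q, hQℓ, rfl⟩, ⟨Y, hYℓ, rfl⟩⟩

lemma image_image_symm (f : (Fin 3 → K) ≃ₗ[K] (Fin 3 → K)) (s : Set (PGPoint K)) :
    hmap f.symm '' (hmap f '' s) = s := by
  ext X
  constructor
  · rintro ⟨_, ⟨Y, hY, rfl⟩, rfl⟩
    rwa [hmap_symm_apply]
  · intro hX
    exact ⟨hmap f X, ⟨X, hX, rfl⟩, hmap_symm_apply f X⟩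

lemma image_symm_image (f : (Fin 3 → K) ≃ₗ[K] (Fin 3 → K)) (s : Set (PGPoint K)) :
    hmap f '' (hmap f.symm '' s) = s := by
  have := image_image_symm f.symm s
  rwa [f.symm_symm] at this

lemma splash_image (f : (Fin 3 → K) ≃ₗ[K] (Fin 3 → K))
    (hl : hmap f '' linf K = linf K) (π : Set (PGPoint K)) :
    hmap f '' splash π = splash (hmap f '' π) := by
  have hl1 : ∀ X ∈ linf K, hmap f X ∈ linf K := by
    intro X hX; rw [← hl]; exact ⟨X, hX, rfl⟩
  have hl2 : ∀ X ∈ linf K, hmap f.symm X ∈ linf K := by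
    intro X hX
    rw [← hl] at hX
    obtain ⟨Y, hY, rfl⟩ := hX
    rwa [hmap_symm_apply]
  refine subset_antisymm (splash_image_subset f hl1 π) ?_
  intro X hX
  have h1 : hmap f.symm X ∈ splash (hmap f.symm '' (hmap f '' π)) :=
    splash_image_subset f.symm hl2 _ ⟨X, hX, rfl⟩
  rw [image_image_symm] at h1
  refine ⟨hmap f.symm X, h1, ?_⟩
  have := hmap_symm_apply f.symm X
  rwa [f.symm_symm] at this

section Alg
variable {F : Type*} (K : Type*) [Field F] [Field K] [Algebra F K]

/-- multiplication by a nonzero scalar as an `F`-linear equiv of `K`. -/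
noncomputable def mulEquiv {l : K} (hl : l ≠ 0) : K ≃ₗ[F] K where
  toFun x := l * x
  invFun x := l⁻¹ * x
  map_add' := mul_add l
  map_smul' c x := Algebra.mul_smul_comm c l x
  left_inv x := by field_simp
  right_inv x := by field_simp

variable {K}

lemma exists_smul_span_eq [FiniteDimensional F K] (hK3 : Module.finrank F K = 3)
    (V₁ V₂ : Submodule F K) (h1 : Module.finrank F V₁ = 2)
    (h2 : Module.finrank F V₂ = 2) :
    ∃ l : K, ∃ hl : l ≠ 0,
      V₁.map ((mulEquiv (F := F) K hl).toLinearMap) = V₂ := by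
  classical
  -- the linear map  λ ↦ (v ↦ λ v mod V₂)
  let Φ : K →ₗ[F] (V₁ →ₗ[F] (K ⧸ V₂)) :=
    { toFun := fun l => V₂.mkQ.comp ((LinearMap.mul F K l).comp V₁.subtype)
      map_add' := by intro a b; ext v; simp [add_mul]
      map_smul' := by intro a b; ext v; simp [Algebra.smul_mul_assoc] }
  have hq : Module.finrank F (K ⧸ V₂) = 1 := by
    have := Submodule.finrank_quotient_add_finrank V₂
    omega
  have hcod : Module.finrank F (V₁ →ₗ[F] (K ⧸ V₂)) = 2 := by
    rw [Module.finrank_linearMap, h1, hq]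
  have hni : ¬ Function.Injective Φ := by
    intro h
    have := LinearMap.finrank_le_finrank_of_injective h
    rw [hK3, hcod] at this
    omega
  rw [← LinearMap.ker_eq_bot] at hni
  obtain ⟨l, hlk, hl⟩ := (Submodule.ne_bot_iff _).1 hni
  have hsub : V₁.map ((mulEquiv (F := F) K hl).toLinearMap) ≤ V₂ := by
    rintro _ ⟨v, hv, rfl⟩
    have : Φ l ⟨v, hv⟩ = 0 := by rw [hlk]; rfl
    have h0 : V₂.mkQ (l * v) = 0 := this
    rwa [Submodule.mkQ_apply, Submodule.Quotient.mk_eq_zero] at h0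
  refine ⟨l, hl, Submodule.eq_of_le_of_finrank_le hsub ?_⟩
  rw [LinearEquiv.finrank_map_eq, h1, h2]
end Alg

section LemA
variable {F : Type*} [Field F] {K : Type*} [Field K] [Algebra F K]

lemma exists_autoequiv [FiniteDimensional F K]
    (α β : (Fin 3 → F) →ₗ[F] K) (h : LinearMap.range α = LinearMap.range β) :
    ∃ e : (Fin 3 → F) ≃ₗ[F] (Fin 3 → F), β.comp e.toLinearMap = α := by
  classical
  set V := Fin 3 → F
  have hker : Module.finrank F (LinearMap.ker α) = Module.finrank F (LinearMap.ker β) := by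
    have h1 := LinearMap.finrank_range_add_finrank_ker α
    have h2 := LinearMap.finrank_range_add_finrank_ker β
    rw [h] at h1
    omega
  let κ : (LinearMap.ker α) ≃ₗ[F] (LinearMap.ker β) := LinearEquiv.ofFinrankEq _ _ hker
  obtain ⟨Cα, hCα⟩ := Submodule.exists_isCompl (LinearMap.ker α)
  obtain ⟨Cβ, hCβ⟩ := Submodule.exists_isCompl (LinearMap.ker β)
  let prα := (LinearMap.ker α).linearProjOfIsCompl Cα hCα
  let βC : Cβ →ₗ[F] K := β.comp Cβ.subtype
  have hβCinj : Function.Injective βC := by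
    rw [← LinearMap.ker_eq_bot, LinearMap.ker_comp]
    rw [Submodule.eq_bot_iff]
    intro x hx
    have h1 : (x : Fin 3 → F) ∈ LinearMap.ker β ⊓ Cβ := ⟨hx, x.2⟩
    rw [hCβ.inf_eq_bot] at h1
    exact Subtype.ext h1
  have hβCrange : LinearMap.range βC = LinearMap.range α := by
    rw [h]
    have : LinearMap.range βC = Submodule.map β Cβ := by
      rw [LinearMap.range_comp, Submodule.range_subtype]
    rw [this]
    have hsup : LinearMap.ker β ⊔ Cβ = ⊤ := hCβ.sup_eq_top
    have : LinearMap.range β = Submodule.map β (LinearMap.ker β ⊔ Cβ) := by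
      rw [hsup, Submodule.map_top]
    rw [this, Submodule.map_sup]
    have hk : Submodule.map β (LinearMap.ker β) = ⊥ := by
      rw [Submodule.eq_bot_iff]
      rintro _ ⟨y, hy, rfl⟩
      exact hy
    rw [hk, bot_sup_eq]
  let eC : Cβ ≃ₗ[F] LinearMap.range βC := LinearEquiv.ofInjective βC hβCinj
  let cast : LinearMap.range α ≃ₗ[F] LinearMap.range βC := LinearEquiv.ofEq _ _ hβCrange.symm
  let e₀ : V →ₗ[F] V :=
    Cβ.subtype.comp (eC.symm.toLinearMap.comp (cast.toLinearMap.comp α.rangeRestrict))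
      + (LinearMap.ker β).subtype.comp (κ.toLinearMap.comp prα)
  have hβe : ∀ x : V, β (e₀ x) = α x := by
    intro x
    have h2 : β ((LinearMap.ker β).subtype (κ (prα x))) = 0 := (κ (prα x)).2
    have h1 : β (Cβ.subtype (eC.symm (cast (α.rangeRestrict x)))) = α x := by
      have : β (Cβ.subtype (eC.symm (cast (α.rangeRestrict x))))
          = βC (eC.symm (cast (α.rangeRestrict x))) := rfl
      rw [this]
      have := eC.apply_symm_apply (cast (α.rangeRestrict x))
      have hcoe : (βC (eC.symm (cast (α.rangeRestrict x))) : K)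
          = ((eC (eC.symm (cast (α.rangeRestrict x)))) : K) := by
        rw [LinearEquiv.ofInjective_apply]
      rw [hcoe, this]
      rfl
    show β ((Cβ.subtype.comp (eC.symm.toLinearMap.comp (cast.toLinearMap.comp α.rangeRestrict))
      + (LinearMap.ker β).subtype.comp (κ.toLinearMap.comp prα)) x) = α x
    rw [LinearMap.add_apply, map_add]
    simp only [LinearMap.comp_apply, LinearEquiv.coe_coe]
    rw [h2, add_zero]
    exact h1
  have hinj : Function.Injective e₀ := by
    intro x y hxy
    suffices h0 : ∀ z : V, e₀ z = 0 → z = 0 by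
      have : e₀ (x - y) = 0 := by rw [map_sub, hxy, sub_self]
      exact sub_eq_zero.mp (h0 _ this)
    intro z hz
    have hαz : α z = 0 := by rw [← hβe z, hz, map_zero]
    have hzker : z ∈ LinearMap.ker α := hαz
    have hrr : α.rangeRestrict z = 0 := by
      apply Subtype.ext
      simpa using hαz
    have hpr : prα z = ⟨z, hzker⟩ :=
      Submodule.linearProjOfIsCompl_apply_left hCα ⟨z, hzker⟩
    have he : e₀ z = (κ ⟨z, hzker⟩ : V) := by
      show Cβ.subtype (eC.symm (cast (α.rangeRestrict z)))
          + (LinearMap.ker β).subtype (κ (prα z)) = _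
      rw [hrr, hpr]
      simp
    rw [he] at hz
    have hz0 : (⟨z, hzker⟩ : LinearMap.ker α) = 0 := by
      apply κ.injective
      have h00 : κ 0 = 0 := κ.toLinearMap.map_zero
      rw [h00]
      exact Subtype.ext hz
    simpa using congrArg Subtype.val hz0
  have hbij : Function.Bijective e₀ :=
    ⟨hinj, (LinearMap.injective_iff_surjective).mp hinj⟩
  exact ⟨LinearEquiv.ofBijective e₀ hbij, LinearMap.ext fun x => hβe x⟩
end LemA

section Ext
variable {F : Type*} [Field F] {K : Type*} [Field K] [Algebra F K]

/-- Extension of an `F`-linear automorphism of `F³` to a `K`-linear automorphism of `K³`. -/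
noncomputable def extE (e : (Fin 3 → F) ≃ₗ[F] (Fin 3 → F)) :
    (Fin 3 → K) ≃ₗ[K] (Fin 3 → K) := by
  classical
  refine LinearEquiv.ofLinear
    (Matrix.toLin' ((LinearMap.toMatrix' (e.toLinearMap)).map (algebraMap F K)))
    (Matrix.toLin' ((LinearMap.toMatrix' (e.symm.toLinearMap)).map (algebraMap F K)))
    ?_ ?_
  · rw [← Matrix.toLin'_mul, ← Matrix.map_mul, ← LinearMap.toMatrix'_comp]
    have : e.toLinearMap.comp e.symm.toLinearMap = LinearMap.id := by
      ext x; simp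
    rw [this, LinearMap.toMatrix'_id, Matrix.map_one _ (map_zero _) (map_one _),
      Matrix.toLin'_one]
  · rw [← Matrix.toLin'_mul, ← Matrix.map_mul, ← LinearMap.toMatrix'_comp]
    have : e.symm.toLinearMap.comp e.toLinearMap = LinearMap.id := by
      ext x; simp
    rw [this, LinearMap.toMatrix'_id, Matrix.map_one _ (map_zero _) (map_one _),
      Matrix.toLin'_one]

lemma extE_apply_alg (e : (Fin 3 → F) ≃ₗ[F] (Fin 3 → F)) (c : Fin 3 → F) :
    extE (K := K) e (fun i => algebraMap F K (c i)) = fun i => algebraMap F K (e c i) := by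
  classical
  have h1 : extE (K := K) e (fun i => algebraMap F K (c i))
      = Matrix.mulVec ((LinearMap.toMatrix' (e.toLinearMap)).map (algebraMap F K))
        (fun i => algebraMap F K (c i)) := by
    show Matrix.toLin' _ _ = _
    rw [Matrix.toLin'_apply]
  rw [h1]
  funext i
  have h2 : e c = Matrix.toLin' (LinearMap.toMatrix' (e.toLinearMap)) c := by
    rw [Matrix.toLin'_toMatrix']; rfl
  rw [h2, Matrix.toLin'_apply]
  simp [Matrix.mulVec, dotProduct, Matrix.map_apply, map_sum, map_mul]
end Ext


section BP
variable {F : Type*} [Field F] {K : Type*} [Field K] [Algebra F K]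

lemma algVec_ne_zero {c : Fin 3 → F} (hc : c ≠ 0) :
    (fun i => algebraMap F K (c i)) ≠ 0 := by
  obtain ⟨i, hi⟩ := Function.ne_iff.mp hc
  intro h
  apply hi
  have := congrFun h i
  exact (algebraMap F K).injective (by simpa using this)

lemma mem_basePlane_iff {P : PGPoint K} :
    P ∈ basePlane F K ↔ ∃ c : Fin 3 → F, ∃ hc : c ≠ 0,
      P = Projectivization.mk K (fun i => algebraMap F K (c i)) (algVec_ne_zero hc) := by
  constructor
  · rintro ⟨v, hv, rfl, hcoord⟩
    choose c hc using hcoord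
    have hveq : v = fun i => algebraMap F K (c i) := by
      funext i; exact (hc i).symm
    have hcne : c ≠ 0 := by
      intro h0
      apply hv
      funext i
      rw [hveq]; simp [h0]
    exact ⟨c, hcne, by subst hveq; rfl⟩
  · rintro ⟨c, hc, rfl⟩
    exact ⟨_, algVec_ne_zero hc, rfl, fun i => ⟨c i, rfl⟩⟩

lemma extE_image_basePlane (e : (Fin 3 → F) ≃ₗ[F] (Fin 3 → F)) :
    hmap (extE (K := K) e) '' basePlane F K = basePlane F K := by
  ext Q
  constructor
  · rintro ⟨P, hP, rfl⟩
    obtain ⟨c, hc, rfl⟩ := mem_basePlane_iff.mp hP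
    rw [hmap_mk _ _ _ (map_ne _ (algVec_ne_zero hc))]
    rw [mem_basePlane_iff]
    have hec : e c ≠ 0 := by
      intro h0
      apply hc
      have := congrArg e.symm h0
      simpa using this
    refine ⟨e c, hec, mk_congr _ _ ?_⟩
    exact extE_apply_alg e c
  · intro hQ
    obtain ⟨c, hc, rfl⟩ := mem_basePlane_iff.mp hQ
    have hec : e.symm c ≠ 0 := by
      intro h0
      apply hc
      have := congrArg e h0
      simpa using this
    refine ⟨Projectivization.mk K (fun i => algebraMap F K (e.symm c i)) (algVec_ne_zero hec),
      mem_basePlane_iff.mpr ⟨e.symm c, hec, rfl⟩, ?_⟩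
    rw [hmap_mk _ _ _ (map_ne _ (algVec_ne_zero hec))]
    refine mk_congr _ _ ?_
    rw [extE_apply_alg e (e.symm c)]
    simp
end BP

section Tan
variable {F : Type*} [Field F] {K : Type*} [Field K] [Algebra F K]

/-- The linear functional cutting out the preimage of `ℓ∞` under `g`. -/
def psi (g : (Fin 3 → K) ≃ₗ[K] (Fin 3 → K)) : (Fin 3 → K) →ₗ[K] K :=
  (LinearMap.proj 2).comp g.toLinearMap

/-- Coordinates of the functional `psi g` in the standard basis. -/
def avec (g : (Fin 3 → K) ≃ₗ[K] (Fin 3 → K)) : Fin 3 → K :=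
  fun i => psi g (Pi.single i 1)

lemma psi_apply_eq (g : (Fin 3 → K) ≃ₗ[K] (Fin 3 → K)) (v : Fin 3 → K) :
    psi g v = (g v) 2 := rfl

lemma psi_sum (g : (Fin 3 → K) ≃ₗ[K] (Fin 3 → K)) (v : Fin 3 → K) :
    psi g v = ∑ i, v i * avec g i := by
  classical
  have hv : v = ∑ i, v i • (Pi.single i 1 : Fin 3 → K) := by
    funext j
    rw [Finset.sum_apply]
    simp [Pi.single_apply]
  conv_lhs => rw [hv]
  rw [map_sum]
  congr 1
  funext i
  rw [map_smul, smul_eq_mul]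
  rfl

lemma psi_alg (g : (Fin 3 → K) ≃ₗ[K] (Fin 3 → K)) (c : Fin 3 → F) :
    psi g (fun i => algebraMap F K (c i))
      = Fintype.linearCombination F (avec g) c := by
  rw [psi_sum, Fintype.linearCombination_apply]
  congr 1
  funext i
  rw [Algebra.smul_def]

lemma tangent_finrank_span [FiniteDimensional F K]
    (g : (Fin 3 → K) ≃ₗ[K] (Fin 3 → K)) (T : PGPoint K)
    (htan : (hmap g '' basePlane F K) ∩ linf K = {T}) :
    Module.finrank F (Submodule.span F (Set.range (avec g))) = 2 := by
  classical
  set L := Fintype.linearCombination F (avec g) with hL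
  -- points of the base plane on the pulled-back line map to T
  have hmem : ∀ (c : Fin 3 → F) (hc : c ≠ 0), L c = 0 →
      hmap g (Projectivization.mk K (fun i => algebraMap F K (c i)) (algVec_ne_zero hc)) = T := by
    intro c hc hLc
    have hlinf : hmap g (Projectivization.mk K (fun i => algebraMap F K (c i))
        (algVec_ne_zero hc)) ∈ linf K := by
      rw [hmap_mk _ _ _ (map_ne _ (algVec_ne_zero hc)), mem_linf_mk]
      have := psi_alg g c
      rw [psi_apply_eq] at this
      rw [this, ← hL, hLc]
    have h1 : hmap g (Projectivization.mk K (fun i => algebraMap F K (c i))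
        (algVec_ne_zero hc)) ∈ (hmap g '' basePlane F K) ∩ linf K :=
      ⟨⟨_, mem_basePlane_iff.mpr ⟨c, hc, rfl⟩, rfl⟩, hlinf⟩
    rw [htan] at h1
    exact h1
  -- the kernel of L is nonzero
  have hx : ∃ c : Fin 3 → F, c ≠ 0 ∧ L c = 0 := by
    have hT : T ∈ (hmap g '' basePlane F K) ∩ linf K := by rw [htan]; rfl
    obtain ⟨⟨P, hP, rfl⟩, hTlinf⟩ := hT
    obtain ⟨c, hc, rfl⟩ := mem_basePlane_iff.mp hP
    refine ⟨c, hc, ?_⟩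
    rw [hmap_mk _ _ _ (map_ne _ (algVec_ne_zero hc)), mem_linf_mk] at hTlinf
    have := psi_alg g c
    rw [psi_apply_eq] at this
    rw [← hL] at this
    rw [← this]
    exact hTlinf
  -- any two kernel vectors are proportional
  have hdep : ∀ c d : Fin 3 → F, c ≠ 0 → d ≠ 0 → L c = 0 → L d = 0 →
      ∃ s : F, c = s • d := by
    intro c d hc hd hLc hLd
    have heq : Projectivization.mk K (fun i => algebraMap F K (c i)) (algVec_ne_zero hc)
        = Projectivization.mk K (fun i => algebraMap F K (d i)) (algVec_ne_zero hd) := by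
      apply hmap_injective g
      rw [hmem c hc hLc, hmem d hd hLd]
    rw [mk_eq_mk_iff] at heq
    obtain ⟨u, hu⟩ := heq
    obtain ⟨i, hi⟩ := Function.ne_iff.mp hd
    have hdi : d i ≠ 0 := by simpa using hi
    have hui : (u : K) * algebraMap F K (d i) = algebraMap F K (c i) := congrFun hu i
    have hdKi : algebraMap F K (d i) ≠ 0 := by
      intro h
      exact hdi ((algebraMap F K).injective (by simpa using h))
    have huval : (u : K) = algebraMap F K (c i * (d i)⁻¹) := by
      rw [map_mul, map_inv₀, ← hui, mul_assoc, mul_inv_cancel₀ hdKi, mul_one]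
    refine ⟨c i * (d i)⁻¹, ?_⟩
    funext j
    have hj : (u : K) * algebraMap F K (d j) = algebraMap F K (c j) := congrFun hu j
    rw [huval, ← map_mul] at hj
    have := (algebraMap F K).injective hj
    rw [← this]
    rfl
  -- hence the kernel has dimension exactly 1
  have hker1 : Module.finrank F (LinearMap.ker L) = 1 := by
    refine le_antisymm ?_ ?_
    · by_contra hcon
      push_neg at hcon
      have h2 : 2 ≤ Module.finrank F (LinearMap.ker L) := hcon
      obtain ⟨f, hf⟩ := exists_linearIndependent_of_le_finrank h2
      set c : Fin 3 → F := (f 0 : Fin 3 → F) with hcdef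
      set d : Fin 3 → F := (f 1 : Fin 3 → F) with hddef
      have hc0 : c ≠ 0 := by
        intro h0
        exact hf.ne_zero 0 (Subtype.ext h0)
      have hd0 : d ≠ 0 := by
        intro h0
        exact hf.ne_zero 1 (Subtype.ext h0)
      obtain ⟨s, hs⟩ := hdep c d hc0 hd0 (f 0).2 (f 1).2
      have hrel : f 0 + (-s) • f 1 = 0 := by
        apply Subtype.ext
        push_cast
        show c + (-s) • d = 0
        rw [hs]
        funext j
        simp
      have hsum : ∑ i, (![1, -s] : Fin 2 → F) i • f i = 0 := by
        rw [Fin.sum_univ_two]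
        show (1:F) • f 0 + (-s) • f 1 = 0
        rw [one_smul]
        exact hrel
      have := Fintype.linearIndependent_iff.mp hf ![1, -s] hsum 0
      simpa using this
    · have : Submodule.span F {(hx.choose : Fin 3 → F)} ≤ LinearMap.ker L := by
        rw [Submodule.span_singleton_le_iff_mem]
        exact hx.choose_spec.2
      have h1 := Submodule.finrank_mono this
      rwa [finrank_span_singleton hx.choose_spec.1] at h1
  have hrn := LinearMap.finrank_range_add_finrank_ker L
  rw [hker1, Module.finrank_fin_fun] at hrn
  have : LinearMap.range L = Submodule.span F (Set.range (avec g)) :=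
    Fintype.range_linearCombination F (avec g)
  rw [this] at hrn
  omega
end Tan

section Main
variable {F : Type*} [Field F] {K : Type*} [Field K] [Algebra F K]

lemma functional_sum (φ : (Fin 3 → K) →ₗ[K] K) (v : Fin 3 → K) :
    φ v = ∑ i, v i * φ (Pi.single i 1) := by
  classical
  have hv : v = ∑ i, v i • (Pi.single i 1 : Fin 3 → K) := by
    funext j
    rw [Finset.sum_apply]
    simp [Pi.single_apply]
  conv_lhs => rw [hv]
  rw [map_sum]
  congr 1
  funext i
  rw [map_smul, smul_eq_mul]

lemma single_alg (j : Fin 3) :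
    (Pi.single j 1 : Fin 3 → K) = fun i => algebraMap F K ((Pi.single j 1 : Fin 3 → F) i) := by
  funext i
  by_cases h : i = j
  · subst h; simp
  · simp [Pi.single_apply, h]

lemma linf_eq_line :
    linf K = {P : PGPoint K | P.submodule ≤
      LinearMap.ker (LinearMap.proj 2 : (Fin 3 → K) →ₗ[K] K)} := by
  ext P
  conv_lhs => rw [← mk_rep P]
  conv_rhs => rw [← mk_rep P]
  rw [mem_linf_mk, mk_mem_line, LinearMap.mem_ker]
  rfl
end Main


/-- the subgroup of `PGL(3,q³)` stabilising `ℓ∞` is transitive on the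
tangent splashes of `ℓ∞`. -/
theorem statement5 (q : ℕ) (F K : Type) [Field F] [Field K] [Fintype F] [Fintype K]
    [Algebra F K] (hF : Fintype.card F = q) (hK : Fintype.card K = q ^ 3)
    (S₁ S₂ : Set (PGPoint K))
    (hS₁ : ∃ T : PGPoint K, IsTangentSplash F S₁ T)
    (hS₂ : ∃ T : PGPoint K, IsTangentSplash F S₂ T) :
    ∃ f : (Fin 3 → K) ≃ₗ[K] (Fin 3 → K),
      hmap f '' linf K = linf K ∧ hmap f '' S₁ = S₂ := by

  classical
  obtain ⟨T₁, π₁, ⟨g₁, hπg₁⟩, htan₁, hsp₁⟩ := hS₁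
  obtain ⟨T₂, π₂, ⟨g₂, hπg₂⟩, htan₂, hsp₂⟩ := hS₂
  subst hπg₁ hπg₂ hsp₁ hsp₂
  have hq2 : 2 ≤ q := by
    rw [← hF]
    exact Fintype.one_lt_card
  have hK3 : Module.finrank F K = 3 := by
    have hc := Module.card_eq_pow_finrank (K := F) (V := K)
    rw [hF, hK] at hc
    exact (Nat.pow_right_injective hq2 hc.symm)
  have h1 : Module.finrank F (Submodule.span F (Set.range (avec g₁))) = 2 :=
    tangent_finrank_span g₁ T₁ htan₁
  have h2 : Module.finrank F (Submodule.span F (Set.range (avec g₂))) = 2 :=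
    tangent_finrank_span g₂ T₂ htan₂
  obtain ⟨l, hl, hmapV⟩ := exists_smul_span_eq (F := F) hK3 _ _ h1 h2
  set α' : (Fin 3 → F) →ₗ[F] K := Fintype.linearCombination F (fun i => l * avec g₁ i)
    with hα'
  set β : (Fin 3 → F) →ₗ[F] K := Fintype.linearCombination F (avec g₂) with hβ
  have hrr : LinearMap.range α' = LinearMap.range β := by
    rw [hα', hβ, Fintype.range_linearCombination, Fintype.range_linearCombination]
    rw [← hmapV, Submodule.map_span]
    congr 1
    rw [← Set.range_comp]
    rfl
  obtain ⟨e, he⟩ := exists_autoequiv α' β hrr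
  -- the key functional identity
  have hsingle : ∀ j, psi g₂ (extE (K := K) e (Pi.single j 1)) = l * avec g₁ j := by
    intro j
    rw [single_alg (F := F) j, extE_apply_alg e, psi_alg, ← hβ]
    have : β (e (Pi.single j 1 : Fin 3 → F)) = α' (Pi.single j 1 : Fin 3 → F) := by
      rw [← he]; rfl
    rw [this, hα', Fintype.linearCombination_apply_single, one_smul]
  have hkey : ∀ v : Fin 3 → K, psi g₂ (extE (K := K) e v) = l * psi g₁ v := by
    intro v
    have hLHS := functional_sum ((psi g₂).comp (extE (K := K) e).toLinearMap) v
    simp only [LinearMap.comp_apply, LinearEquiv.coe_coe] at hLHS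
    rw [hLHS, psi_sum g₁ v, Finset.mul_sum]
    congr 1
    funext i
    rw [hsingle i]
    ring
  set f : (Fin 3 → K) ≃ₗ[K] (Fin 3 → K) := g₁.symm ≪≫ₗ extE (K := K) e ≪≫ₗ g₂ with hf
  have hWinf : Submodule.map f.toLinearMap
      (LinearMap.ker (LinearMap.proj 2 : (Fin 3 → K) →ₗ[K] K))
      = LinearMap.ker (LinearMap.proj 2 : (Fin 3 → K) →ₗ[K] K) := by
    ext x
    rw [Submodule.mem_map_equiv, LinearMap.mem_ker, LinearMap.mem_ker]
    have hsymm : f.symm x = g₁ ((extE (K := K) e).symm (g₂.symm x)) := by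
      rw [hf]; rfl
    have hproj : (LinearMap.proj 2 : (Fin 3 → K) →ₗ[K] K) (f.symm x)
        = psi g₁ ((extE (K := K) e).symm (g₂.symm x)) := by
      rw [hsymm, psi_apply_eq]
      simp
    rw [hproj]
    have h3 := hkey ((extE (K := K) e).symm (g₂.symm x))
    rw [LinearEquiv.apply_symm_apply] at h3
    have h4 : psi g₂ (g₂.symm x) = x 2 := by
      rw [psi_apply_eq, LinearEquiv.apply_symm_apply]
    rw [h4] at h3
    constructor
    · intro h0
      have : x 2 = l * 0 := by rw [← h0, ← h3]
      simpa using this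
    · intro h0
      have h0' : x 2 = 0 := h0
      rw [h0'] at h3
      rcases mul_eq_zero.mp h3.symm with h' | h'
      · exact absurd h' hl
      · exact h'
  have hlinf : hmap f '' linf K = linf K := by
    rw [linf_eq_line, image_line, hWinf]
  have hcomp : g₁ ≪≫ₗ f = extE (K := K) e ≪≫ₗ g₂ := by
    apply LinearEquiv.ext
    intro x
    rw [hf]
    simp [LinearEquiv.trans_apply]
  have himg : hmap f '' (hmap g₁ '' basePlane F K) = hmap g₂ '' basePlane F K := by
    rw [Set.image_image]
    have : (fun P => hmap f (hmap g₁ P)) = fun P => hmap g₂ (hmap (extE (K := K) e) P) := by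
      funext P
      rw [hmap_hmap g₁ f, hmap_hmap (extE (K := K) e) g₂, hcomp]
    rw [this, ← Set.image_image (hmap g₂), extE_image_basePlane]
  exact ⟨f, hlinf, by rw [splash_image f hlinf, himg]⟩


end TangentSplashPaper
end

section
/- Let q be a prime power and let S be a tangent splash of ℓ∞ in PG(2,q³) whose centre is the point T = (1,0,0). Identify ℓ∞ \ {T} with GF(q³) via (x,1,0) ↦ x. Then S \ {T} is a coset of a 2-dimensional GF(q)-subspace of GF(q³); equivalently, there exist L ∈ GF(q³) \ {0} and φ ∈ GF(q) such that S \ {T} = { x ∈ GF(q³) : Lx + L^q x^q + L^{q²} x^{q²} + φ = 0 }, i.e. S is a Sherk surface S(0,0,L,φ) of size q²+1. -/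
namespace TangentSplashPaper

open Projectivization

/-- `![x, 1, 0]` is a nonzero vector. -/
lemma vec_x10_ne_zero {K : Type*} [Field K] (x : K) : ![x, (1 : K), 0] ≠ 0 := by
  intro h
  have h1 := congrFun h 1
  simp at h1

/-- `![1, 0, 0]` is a nonzero vector. -/
lemma vec_100_ne_zero {K : Type*} [Field K] : ![(1 : K), 0, 0] ≠ 0 := by
  intro h
  have h0 := congrFun h 0
  simp at h0


set_option linter.unusedSectionVars false

section Alg
variable {K : Type*} [Field K]

/-- 3×3 determinant of three row vectors. -/
def det3 (a b c : Fin 3 → K) : K := (Matrix.of ![a, b, c]).det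

lemma det3_expand (a b c : Fin 3 → K) : det3 a b c =
    a 0 * (b 1 * c 2) - a 0 * (b 2 * c 1) - a 1 * (b 0 * c 2) + a 1 * (b 2 * c 0)
      + a 2 * (b 0 * c 1) - a 2 * (b 1 * c 0) := by
  simp [det3, Matrix.det_fin_three]; ring

/-- pointwise pair independence -/
def indep2 (a b : Fin 3 → K) : Prop :=
  ∀ x y : K, (∀ i, x * a i + y * b i = 0) → x = 0 ∧ y = 0

/-- pointwise dependence of a triple -/
def dep3 (a b c : Fin 3 → K) : Prop :=
  ∃ x y z : K, ¬(x = 0 ∧ y = 0 ∧ z = 0) ∧ ∀ i, x * a i + y * b i + z * c i = 0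

lemma det3_eq_zero_iff_dep3 (a b c : Fin 3 → K) : det3 a b c = 0 ↔ dep3 a b c := by
  rw [det3, ← Matrix.exists_vecMul_eq_zero_iff]
  constructor
  · rintro ⟨v, hv, hsum⟩
    refine ⟨v 0, v 1, v 2, ?_, fun j => ?_⟩
    · rintro ⟨h0, h1, h2⟩
      apply hv; funext i; fin_cases i <;> assumption
    · have := congrFun hsum j
      simpa [Matrix.vecMul, dotProduct, Fin.sum_univ_three, add_assoc] using this
  · rintro ⟨x, y, z, hxyz, hsum⟩
    refine ⟨![x, y, z], ?_, ?_⟩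
    · intro h
      exact hxyz ⟨congrFun h 0, congrFun h 1, congrFun h 2⟩
    · funext j
      simpa [Matrix.vecMul, dotProduct, Fin.sum_univ_three, add_assoc] using hsum j

lemma dep3_of_pair {p q a b c : Fin 3 → K}
    (ha : ∃ s t : K, ∀ i, a i = s * p i + t * q i)
    (hb : ∃ s t : K, ∀ i, b i = s * p i + t * q i)
    (hc : ∃ s t : K, ∀ i, c i = s * p i + t * q i) : dep3 a b c := by
  obtain ⟨s1, t1, h1⟩ := ha
  obtain ⟨s2, t2, h2⟩ := hb
  obtain ⟨s3, t3, h3⟩ := hc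
  set g : Fin 3 → (Fin 2 → K) := ![![s1, t1], ![s2, t2], ![s3, t3]] with hg
  have hnli : ¬ LinearIndependent K g := by
    intro h
    have := h.fintype_card_le_finrank
    rw [Module.finrank_fin_fun] at this
    simp at this
  rw [Fintype.not_linearIndependent_iff] at hnli
  obtain ⟨cf, hsum, i, hi⟩ := hnli
  have hs : cf 0 * s1 + cf 1 * s2 + cf 2 * s3 = 0 := by
    have := congrFun (by simpa [Fin.sum_univ_three] using hsum) (0 : Fin 2)
    simpa [hg] using this
  have ht : cf 0 * t1 + cf 1 * t2 + cf 2 * t3 = 0 := by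
    have := congrFun (by simpa [Fin.sum_univ_three] using hsum) (1 : Fin 2)
    simpa [hg] using this
  refine ⟨cf 0, cf 1, cf 2, ?_, fun j => ?_⟩
  · rintro ⟨h0, h1', h2'⟩
    fin_cases i <;> simp_all
  · rw [h1 j, h2 j, h3 j]
    linear_combination p j * hs + q j * ht

lemma not_indep2 {a b : Fin 3 → K} (h : ¬ indep2 a b) (ha : a ≠ 0) :
    ∃ c : K, ∀ i, b i = c * a i := by
  unfold indep2 at h
  push_neg at h
  obtain ⟨x, y, hsum, hxy⟩ := h
  by_cases hy : y = 0
  · subst hy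
    have hx : x ≠ 0 := by tauto
    exfalso
    apply ha
    funext i
    have := hsum i
    simp at this
    rcases this with h | h
    · exact absurd h hx
    · exact h
  · refine ⟨-(y⁻¹ * x), fun i => ?_⟩
    have hyb : y * b i = -(x * a i) := by linear_combination hsum i
    calc b i = y⁻¹ * (y * b i) := by rw [← mul_assoc, inv_mul_cancel₀ hy, one_mul]
      _ = y⁻¹ * (-(x * a i)) := by rw [hyb]
      _ = -(y⁻¹ * x) * a i := by ring

lemma indep2.ne_zero_left {a b : Fin 3 → K} (h : indep2 a b) : a ≠ 0 := by
  intro h0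
  have := h 1 0 (fun i => by simp [h0])
  simp at this

lemma indep2.ne_zero_right {a b : Fin 3 → K} (h : indep2 a b) : b ≠ 0 := by
  intro h0
  have := h 0 1 (fun i => by simp [h0])
  simp at this

/-- coordinates w.r.t. an independent pair are unique -/
lemma indep2.coords {w1 w2 : Fin 3 → K} (h : indep2 w1 w2) {A B A' B' : K}
    (heq : ∀ i, A * w1 i + B * w2 i = A' * w1 i + B' * w2 i) : A = A' ∧ B = B' := by
  have := h (A - A') (B - B') (fun i => by linear_combination heq i)
  constructor <;> [linear_combination this.1; linear_combination this.2]

/-- inverting a 2×2 change of pair: if `u, v` are an independent pair inside the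
plane spanned by `x, y`, then `x` and `y` are combinations of `u, v`. -/
lemma pair_inversion {x y u v : Fin 3 → K} {A B A' B' : K}
    (hu : ∀ i, u i = A * x i + B * y i) (hv : ∀ i, v i = A' * x i + B' * y i)
    (huv : indep2 u v) :
    (∃ α β : K, ∀ i, x i = α * u i + β * v i) ∧
    (∃ γ δ : K, ∀ i, y i = γ * u i + δ * v i) := by
  set Δ := A * B' - A' * B with hΔdef
  have hΔ : Δ ≠ 0 := by
    intro h0
    have h1 : ∀ i, B' * u i + (-B) * v i = 0 := by
      intro i; rw [hu i, hv i]; linear_combination x i * h0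
    obtain ⟨hB', hB⟩ := huv B' (-B) h1
    have hB0 : B = 0 := by linear_combination -hB
    subst hB0 hB'
    have hA0 : A ≠ 0 := by
      intro hA0
      have := huv 1 0 (fun i => by simp [hu i, hA0])
      simp at this
    have := huv A' (-A) (fun i => by rw [hu i, hv i]; ring)
    exact hA0 (by linear_combination -this.2)
  constructor
  · exact ⟨Δ⁻¹ * B', Δ⁻¹ * (-B), fun i => by
      rw [hu i, hv i]; field_simp; ring⟩
  · exact ⟨Δ⁻¹ * (-A'), Δ⁻¹ * A, fun i => by
      rw [hu i, hv i]; field_simp; ring⟩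

/-- find two independent members of a family `λ ↦ A λ • w1 + B λ • w2`. -/
lemma exists_indep_pair {w1 w2 : Fin 3 → K} (hind : indep2 w1 w2) (A B : K → K)
    (hnz : ∀ A₀ B₀ : K, (∀ lam : K, B₀ * A lam - A₀ * B lam = 0) → A₀ = 0 ∧ B₀ = 0) :
    ∃ l r : K, indep2 (fun i => A l * w1 i + B l * w2 i)
      (fun i => A r * w1 i + B r * w2 i) := by
  by_contra hcon
  push_neg at hcon
  by_cases hex : ∃ l0 : K, ¬(A l0 = 0 ∧ B l0 = 0)
  · obtain ⟨l0, hl0⟩ := hex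
    have htt0 : (fun i => A l0 * w1 i + B l0 * w2 i) ≠ (0 : Fin 3 → K) := by
      intro h0
      exact hl0 (hind (A l0) (B l0) (fun i => congrFun h0 i))
    have key : ∀ lam : K, B l0 * A lam - A l0 * B lam = 0 := by
      intro lam
      obtain ⟨s, hs⟩ := not_indep2 (hcon l0 lam) htt0
      have := hind.coords (A := A lam) (B := B lam) (A' := s * A l0) (B' := s * B l0)
        (fun i => by rw [hs i]; ring)
      rw [this.1, this.2]; ring
    obtain ⟨hA0, hB0⟩ := hnz (A l0) (B l0) key
    exact hl0 ⟨hA0, hB0⟩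
  · push_neg at hex
    have := hnz 1 0 (fun lam => by rcases hex lam with h; rw [h.2]; ring)
    simp at this

end Alg



section AuxField
open Polynomial

variable {F K : Type*} [Field F] [Field K] [Fintype F] [Algebra F K]

/-- the `|F|`-power map on `K` is a ring homomorphism -/
lemma exists_powHom (F K : Type*) [Field F] [Field K] [Fintype F] [Algebra F K] :
    ∃ σ : K →+* K, ∀ x : K, σ x = x ^ (Fintype.card F) := by
  haveI : CharP F (ringChar F) := ringChar.charP F
  obtain ⟨n, hp, hcard⟩ := FiniteField.card F (ringChar F)
  haveI : CharP K (ringChar F) := charP_of_injective_algebraMap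
    (algebraMap F K).injective (ringChar F)
  haveI : Fact (ringChar F).Prime := ⟨hp⟩
  refine ⟨iterateFrobenius K (ringChar F) n, fun x => ?_⟩
  rw [iterateFrobenius_def, hcard]

/-- fixed points of the `|F|`-power map are exactly the subfield `F` -/
lemma pow_card_eq_self_iff (x : K) :
    x ^ (Fintype.card F) = x ↔ x ∈ (algebraMap F K).range := by
  set q := Fintype.card F with hq
  have hq1 : 1 < q := Fintype.one_lt_card
  constructor
  · intro hx
    classical
    by_contra hnot
    set P : K[X] := X ^ q - X with hP
    have c1 : ((1:ℕ) = q) = False := eq_false (by omega)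
    have c2 : ((q:ℕ) = 1) = False := eq_false (by omega)
    have hPne : P ≠ 0 := by
      intro h
      have hco := congrArg (fun p => coeff p q) h
      simp [hP, coeff_X_pow, coeff_X, c1, c2] at hco
    have hxnotmem : x ∉ (Finset.univ.image (algebraMap F K)) := by
      intro hmem
      obtain ⟨a, _, ha⟩ := Finset.mem_image.mp hmem
      exact hnot ⟨a, ha⟩
    set s : Finset K := insert x (Finset.univ.image (algebraMap F K)) with hs
    have hcards : q + 1 ≤ s.card := by
      rw [hs, Finset.card_insert_of_notMem hxnotmem,
        Finset.card_image_of_injective _ (algebraMap F K).injective]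
      simp [hq]
    have heval : ∀ i ∈ s, P.eval i = 0 := by
      intro i hi
      rcases Finset.mem_insert.mp hi with rfl | hi
      · simp [hP, hx]
      · obtain ⟨a, _, rfl⟩ := Finset.mem_image.mp hi
        simp only [hP, eval_sub, eval_pow, eval_X]
        rw [← map_pow, FiniteField.pow_card, sub_self]
    have hdeg : P.natDegree < s.card := by
      have h1 : P.natDegree ≤ q := by
        refine le_trans (natDegree_sub_le _ _) ?_
        simp [natDegree_X_pow, natDegree_X]
        omega
      omega
    exact hPne (eq_zero_of_natDegree_lt_card_of_eval_eq_zero' P s heval hdeg)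
  · rintro ⟨a, rfl⟩
    rw [← map_pow, FiniteField.pow_card]

/-- a `q`-polynomial of degree `< q³ = |K|` vanishing identically is zero -/
lemma poly_trick [Fintype K] {q : ℕ} (hq : 2 ≤ q) (hK : Fintype.card K = q ^ 3)
    {A B C : K} (h : ∀ x : K, A * x + B * x ^ q + C * x ^ (q ^ 2) = 0) :
    A = 0 ∧ B = 0 ∧ C = 0 := by
  set P : K[X] := Polynomial.C A * X + Polynomial.C B * X ^ q
    + Polynomial.C C * X ^ (q ^ 2) with hP
  have hq1 : q ≠ 1 := by omega
  have hq2q : q ^ 2 ≠ q := by nlinarith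
  have hq21 : q ^ 2 ≠ 1 := by nlinarith
  have hdeg : P.natDegree ≤ q ^ 2 := by
    refine le_trans (natDegree_add_le _ _) (max_le (le_trans (natDegree_add_le _ _)
      (max_le ?_ ?_)) ?_)
    · exact le_trans (natDegree_C_mul_le _ _) (by simp [natDegree_X]; nlinarith)
    · exact le_trans (natDegree_C_mul_le _ _) (by simp [natDegree_X_pow]; nlinarith)
    · exact le_trans (natDegree_C_mul_le _ _) (by simp [natDegree_X_pow])
  have hP0 : P = 0 := by
    refine eq_zero_of_natDegree_lt_card_of_eval_eq_zero P Function.injective_id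
      (fun x => ?_) ?_
    · simpa [hP] using h x
    · rw [hK]
      refine lt_of_le_of_lt hdeg ?_
      exact Nat.pow_lt_pow_right (by omega) (by omega)
  have c1 : ((1:ℕ) = q) = False := eq_false (by omega)
  have c2 : ((q:ℕ) = 1) = False := eq_false (by omega)
  have c3 : ((q:ℕ) = q ^ 2) = False := eq_false (Ne.symm hq2q)
  have c4 : ((q:ℕ) ^ 2 = q) = False := eq_false hq2q
  have c5 : ((1:ℕ) = q ^ 2) = False := eq_false (Ne.symm hq21)
  have c6 : ((q:ℕ) ^ 2 = 1) = False := eq_false hq21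
  refine ⟨?_, ?_, ?_⟩
  · have h1 := congrArg (fun p => coeff p 1) hP0
    simpa [hP, coeff_X_pow, coeff_X, c1, c2, c3, c4, c5, c6] using h1
  · have h1 := congrArg (fun p => coeff p q) hP0
    simpa [hP, coeff_X_pow, coeff_X, c1, c2, c3, c4, c5, c6] using h1
  · have h1 := congrArg (fun p => coeff p (q ^ 2)) hP0
    simpa [hP, coeff_X_pow, coeff_X, c1, c2, c3, c4, c5, c6] using h1


end AuxField

section Descent
variable {K : Type*} [Field K]

lemma det3_map (σ : K →+* K) (a b c : Fin 3 → K) :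
    σ (det3 a b c) = det3 (fun i => σ (a i)) (fun i => σ (b i)) (fun i => σ (c i)) := by
  simp only [det3_expand, map_add, map_sub, map_mul]

/-- multilinear expansion of the splash determinant -/
lemma det3_key (u₀ u₁ v1 v2 : Fin 3 → K) (μ ν x xq xqq : K) :
    det3 (fun i => x * u₀ i + u₁ i) (fun i => xq * (μ * u₀ i) + v1 i)
      (fun i => xqq * (ν * u₀ i) + v2 i)
    = x * det3 u₀ v1 v2 + xq * (μ * det3 u₁ u₀ v2) + xqq * (ν * det3 u₁ v1 u₀)
      + det3 u₁ v1 v2 := by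
  simp only [det3_expand]; ring

lemma det3_cyclic (a b c : Fin 3 → K) : det3 a b c = det3 c a b := by
  simp only [det3_expand]; ring

/-- The Galois-descent step: a nonzero vector whose `σ`-conjugate triple is
dependent lies in a plane spanned by two independent `σ`-rational vectors. -/
lemma descent (σ : K →+* K) (hσ3 : ∀ x : K, σ (σ (σ x)) = x)
    (htrick : ∀ A B C : K, (∀ x : K, A * x + B * σ x + C * σ (σ x) = 0) →
      A = 0 ∧ B = 0 ∧ C = 0)
    (w : Fin 3 → K) (hw : w ≠ 0)
    (hdep : dep3 w (fun i => σ (w i)) (fun i => σ (σ (w i)))) :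
    ∃ p p' : Fin 3 → K, (∀ i, σ (p i) = p i) ∧ (∀ i, σ (p' i) = p' i) ∧
      indep2 p p' ∧ ∃ α β : K, ∀ i, w i = α * p i + β * p' i := by
  classical
  set sw : Fin 3 → K := fun i => σ (w i) with hsw
  set ssw : Fin 3 → K := fun i => σ (sw i) with hssw
  obtain ⟨k, hk⟩ : ∃ k, w k ≠ 0 := by
    by_contra hc; push_neg at hc; exact hw (funext hc)
  have hswk : sw k ≠ 0 := fun h => hk (σ.injective (by rw [map_zero]; exact h))
  by_cases hcase : indep2 w sw
  · -- case 2 : w and σw independent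
    obtain ⟨xx, yy, zz, hnz, hsum⟩ := hdep
    have hzz : zz ≠ 0 := by
      intro h0
      subst h0
      have := hcase xx yy (fun i => by have := hsum i; simpa using this)
      exact hnz ⟨this.1, this.2, rfl⟩
    set a : K := -(zz⁻¹ * xx) with ha
    set b : K := -(zz⁻¹ * yy) with hb
    have hssw_eq : ∀ i, ssw i = a * w i + b * sw i := by
      intro i
      have h2 : zz * ssw i = -(xx * w i) - yy * sw i := by linear_combination hsum i
      rw [ha, hb]
      calc ssw i = zz⁻¹ * (zz * ssw i) := by rw [← mul_assoc, inv_mul_cancel₀ hzz, one_mul]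
        _ = zz⁻¹ * (-(xx * w i) - yy * sw i) := by rw [h2]
        _ = -(zz⁻¹ * xx) * w i + -(zz⁻¹ * yy) * sw i := by ring
    set A : K → K := fun lam => lam + σ (σ lam) * a with hA
    set B : K → K := fun lam => σ lam + σ (σ lam) * b with hB
    have hnz' : ∀ A₀ B₀ : K, (∀ lam : K, B₀ * A lam - A₀ * B lam = 0) → A₀ = 0 ∧ B₀ = 0 := by
      intro A₀ B₀ hlam
      have := htrick B₀ (-A₀) (B₀ * a - A₀ * b) (fun x => by
        have := hlam x
        rw [hA, hB] at this
        dsimp at this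
        linear_combination this)
      exact ⟨by linear_combination -this.2.1, this.1⟩
    obtain ⟨l, r, hlr⟩ := exists_indep_pair hcase A B hnz'
    set pl : Fin 3 → K := fun i => A l * w i + B l * sw i with hpl
    set pr : Fin 3 → K := fun i => A r * w i + B r * sw i with hpr
    have hform : ∀ lam i, A lam * w i + B lam * sw i
        = lam * w i + σ lam * sw i + σ (σ lam) * ssw i := by
      intro lam i
      rw [hA, hB, hssw_eq i]
      dsimp only
      ring
    have hrat : ∀ lam i, σ (A lam * w i + B lam * sw i) = A lam * w i + B lam * sw i := by
      intro lam i
      rw [hform lam i]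
      have h1 : σ (w i) = sw i := rfl
      have h2 : σ (sw i) = ssw i := rfl
      have h3 : σ (ssw i) = w i := by rw [hssw, hsw]; exact hσ3 (w i)
      simp only [map_add, map_mul, h1, h2, h3, hσ3]
      ring
    refine ⟨pl, pr, fun i => hrat l i, fun i => hrat r i, hlr, ?_⟩
    obtain ⟨⟨α, β, hαβ⟩, -⟩ := pair_inversion (fun i => rfl) (fun i => rfl) hlr
    exact ⟨α, β, hαβ⟩
  · -- case 1 : σw is a multiple of w
    obtain ⟨c, hc⟩ := not_indep2 hcase hw
    have hck : c ≠ 0 := by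
      intro h0
      apply hswk
      rw [hc k, h0, zero_mul]
    set p : Fin 3 → K := fun i => (w k)⁻¹ * w i with hp
    have hratp : ∀ i, σ (p i) = p i := by
      intro i
      rw [hp]
      dsimp only
      rw [map_mul, map_inv₀]
      have h1 : σ (w i) = c * w i := hc i
      have h2 : σ (w k) = c * w k := hc k
      rw [h1, h2]
      field_simp
    have hpne : p ≠ 0 := by
      intro h0
      have := congrFun h0 k
      rw [hp] at this
      dsimp at this
      rw [inv_mul_cancel₀ hk] at this
      simp at this
    -- find a standard vector independent from p
    set std : Fin 3 → Fin 3 → K := fun j i => if i = j then 1 else 0 with hstdd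
    have hstd : ∃ j : Fin 3, indep2 p (std j) := by
      by_contra hcon
      push_neg at hcon
      obtain ⟨c₀, hc₀⟩ := not_indep2 (hcon 0) hpne
      obtain ⟨c₁, hc₁⟩ := not_indep2 (hcon 1) hpne
      have h1 : (1:K) = c₀ * p 0 := by have := hc₀ 0; simpa [hstdd] using this
      have h2 : (0:K) = c₀ * p 1 := by have := hc₀ 1; simpa [hstdd] using this
      have h3 : (1:K) = c₁ * p 1 := by have := hc₁ 1; simpa [hstdd] using this
      have h4 : (0:K) = c₁ * p 0 := by have := hc₁ 0; simpa [hstdd] using this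
      have hc₁0 : c₁ ≠ 0 := fun h => by rw [h, zero_mul] at h3; exact one_ne_zero h3
      have hp0 : p 0 = 0 := by
        rcases mul_eq_zero.mp h4.symm with h | h
        · exact absurd h hc₁0
        · exact h
      rw [hp0, mul_zero] at h1
      exact one_ne_zero h1
    obtain ⟨j, hj⟩ := hstd
    have hratj : ∀ i, σ (std j i) = std j i := by
      intro i
      by_cases h : i = j <;> simp [hstdd, h]
    refine ⟨p, std j, hratp, hratj, hj, ⟨w k, 0, fun i => ?_⟩⟩
    rw [hp]
    dsimp only
    rw [← mul_assoc, mul_inv_cancel₀ hk]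
    ring

end Descent



section Proj
variable {F K : Type*} [Field F] [Field K] [Algebra F K]

lemma range_pair (a b : Fin 3 → K) : Set.range ![a, b] = {a, b} := by
  ext z
  constructor
  · rintro ⟨i, rfl⟩
    fin_cases i
    · exact Or.inl rfl
    · exact Or.inr rfl
  · rintro (rfl | rfl)
    · exact ⟨0, rfl⟩
    · exact ⟨1, rfl⟩

lemma mk_mem_linf_iff (v : Fin 3 → K) (hv : v ≠ 0) :
    Projectivization.mk K v hv ∈ linf K ↔ v 2 = 0 := by
  obtain ⟨a, ha⟩ := Projectivization.exists_smul_eq_mk_rep K v hv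
  have h2 : (Projectivization.mk K v hv).rep 2 = (a : K) * v 2 := by
    rw [← ha]; simp [Units.smul_def]
  show (Projectivization.mk K v hv).rep 2 = 0 ↔ v 2 = 0
  rw [h2]
  constructor
  · intro h
    rcases mul_eq_zero.mp h with h | h
    · exact absurd h a.ne_zero
    · exact h
  · intro h
    rw [h, mul_zero]

lemma hmap_mk_s18 (f : (Fin 3 → K) ≃ₗ[K] (Fin 3 → K)) (v : Fin 3 → K) (hv : v ≠ 0) :
    hmap f (Projectivization.mk K v hv)
      = Projectivization.mk K (f v) (fun h => hv (by
          have := congrArg f.symm h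
          simpa using this)) := by
  exact Projectivization.map_mk f.toLinearMap f.injective v hv

lemma indep2_image (f : (Fin 3 → K) ≃ₗ[K] (Fin 3 → K)) {v v' : Fin 3 → K}
    (h : indep2 v v') : LinearIndependent K ![f v, f v'] := by
  rw [LinearIndependent.pair_iff]
  intro s t hst
  have h0 : f (s • v + t • v') = 0 := by
    rw [map_add, map_smul, map_smul]; exact hst
  have h1 : s • v + t • v' = 0 := by
    have := congrArg f.symm h0
    simpa using this
  exact h s t (fun i => by have := congrFun h1 i; simpa using this)

lemma finrank_span_pair (f : (Fin 3 → K) ≃ₗ[K] (Fin 3 → K)) {v v' : Fin 3 → K}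
    (h : indep2 v v') :
    Module.finrank K (Submodule.span K {f v, f v'} : Submodule K (Fin 3 → K)) = 2 := by
  have := finrank_span_eq_card (R := K) (indep2_image f h)
  rw [range_pair] at this
  simpa using this

/-- forward bridge: splash membership gives a rational plane through `f⁻¹(x,1,0)` -/
lemma splash_forward (f : (Fin 3 → K) ≃ₗ[K] (Fin 3 → K)) (x : K)
    (hmem : Projectivization.mk K ![x, 1, 0] (vec_x10_ne_zero x)
      ∈ splash (hmap f '' basePlane F K)) :
    ∃ v v' : Fin 3 → K, (∀ i, v i ∈ (algebraMap F K).range) ∧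
      (∀ i, v' i ∈ (algebraMap F K).range) ∧ indep2 v v' ∧
      ∃ α β : K, ∀ i, f.symm ![x, 1, 0] i = α * v i + β * v' i := by
  obtain ⟨-, P, Q, hP, hQ, hPQ, ℓ, ⟨W, hW2, rfl⟩, hPl, hQl, hXl⟩ := hmem
  obtain ⟨Y, ⟨v, hv0, rfl, hvrat⟩, rfl⟩ := hP
  obtain ⟨Z, ⟨v', hv'0, rfl, hv'rat⟩, rfl⟩ := hQ
  rw [hmap_mk_s18 f v hv0] at hPl hPQ
  rw [hmap_mk_s18 f v' hv'0] at hQl hPQ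
  have hfvW : f v ∈ W := by
    rw [Set.mem_setOf_eq, Projectivization.submodule_mk,
      Submodule.span_singleton_le_iff_mem] at hPl
    exact hPl
  have hfv'W : f v' ∈ W := by
    rw [Set.mem_setOf_eq, Projectivization.submodule_mk,
      Submodule.span_singleton_le_iff_mem] at hQl
    exact hQl
  have hxW : (![x, 1, 0] : Fin 3 → K) ∈ W := by
    rw [Set.mem_setOf_eq, Projectivization.submodule_mk,
      Submodule.span_singleton_le_iff_mem] at hXl
    exact hXl
  have hind : indep2 v v' := by
    by_contra hcon
    obtain ⟨c, hc⟩ := not_indep2 hcon hv0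
    have hc0 : c ≠ 0 := by
      intro h0
      apply hv'0
      funext i
      simp [hc i, h0]
    apply hPQ
    rw [Projectivization.mk_eq_mk_iff']
    refine ⟨c⁻¹, ?_⟩
    have hfv' : f v' = c • f v := by
      rw [← map_smul]
      congr 1
      funext i
      rw [hc i]; simp
    rw [hfv', smul_smul, inv_mul_cancel₀ hc0, one_smul]
  set Wp : Submodule K (Fin 3 → K) := Submodule.span K {f v, f v'} with hWp
  have hle : Wp ≤ W := by
    rw [hWp, Submodule.span_le]
    rintro z (rfl | rfl)
    · exact hfvW
    · exact hfv'W
  have hWpW : Wp = W := by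
    refine Submodule.eq_of_le_of_finrank_le hle ?_
    rw [hW2, finrank_span_pair f hind]
  have hxWp : (![x, 1, 0] : Fin 3 → K) ∈ Wp := hWpW ▸ hxW
  rw [hWp, Submodule.mem_span_pair] at hxWp
  obtain ⟨α, β, hαβ⟩ := hxWp
  refine ⟨v, v', hvrat, hv'rat, hind, α, β, fun i => ?_⟩
  have := congrArg f.symm hαβ
  rw [map_add, map_smul, map_smul] at this
  simp only [LinearEquiv.symm_apply_apply] at this
  rw [← this]
  simp

/-- reverse bridge -/
lemma splash_reverse (f : (Fin 3 → K) ≃ₗ[K] (Fin 3 → K)) (x : K)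
    (v v' : Fin 3 → K) (hvrat : ∀ i, v i ∈ (algebraMap F K).range)
    (hv'rat : ∀ i, v' i ∈ (algebraMap F K).range) (hind : indep2 v v')
    (α β : K) (hw : ∀ i, f.symm ![x, 1, 0] i = α * v i + β * v' i) :
    Projectivization.mk K ![x, 1, 0] (vec_x10_ne_zero x)
      ∈ splash (hmap f '' basePlane F K) := by
  have hv0 : v ≠ 0 := hind.ne_zero_left
  have hv'0 : v' ≠ 0 := hind.ne_zero_right
  have hfv0 : f v ≠ 0 := fun h => hv0 (by
    have := congrArg f.symm h; simpa using this)
  have hfv'0 : f v' ≠ 0 := fun h => hv'0 (by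
    have := congrArg f.symm h; simpa using this)
  refine ⟨(mk_mem_linf_iff _ _).mpr (by simp), ?_⟩
  refine ⟨Projectivization.mk K (f v) hfv0, Projectivization.mk K (f v') hfv'0,
    ?_, ?_, ?_, ?_⟩
  · exact ⟨Projectivization.mk K v hv0, ⟨v, hv0, rfl, hvrat⟩, hmap_mk_s18 f v hv0⟩
  · exact ⟨Projectivization.mk K v' hv'0, ⟨v', hv'0, rfl, hv'rat⟩, hmap_mk_s18 f v' hv'0⟩
  · intro h
    rw [Projectivization.mk_eq_mk_iff'] at h
    obtain ⟨a, ha⟩ := h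
    have hva : v = a • v' := by
      have := congrArg f.symm ha
      rw [map_smul] at this
      simpa using this.symm
    have := hind 1 (-a) (fun i => by rw [congrFun hva i]; simp)
    simp at this
  · refine ⟨{R | R.submodule ≤ Submodule.span K {f v, f v'}},
      ⟨Submodule.span K {f v, f v'}, finrank_span_pair f hind, rfl⟩, ?_, ?_, ?_⟩
    · rw [Set.mem_setOf_eq, Projectivization.submodule_mk,
        Submodule.span_singleton_le_iff_mem]
      exact Submodule.subset_span (Or.inl rfl)
    · rw [Set.mem_setOf_eq, Projectivization.submodule_mk,
        Submodule.span_singleton_le_iff_mem]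
      exact Submodule.subset_span (Or.inr rfl)
    · rw [Set.mem_setOf_eq, Projectivization.submodule_mk,
        Submodule.span_singleton_le_iff_mem, Submodule.mem_span_pair]
      refine ⟨α, β, ?_⟩
      have hfw : f.symm ![x, 1, 0] = α • v + β • v' := by
        funext i
        rw [hw i]; simp
      have := congrArg f hfw
      rw [map_add, map_smul, map_smul] at this
      simpa using this.symm

end Proj


/-- a tangent splash `S` of `ℓ∞` with centre `T = (1,0,0)`, with
`ℓ∞ \ {T}` identified with `GF(q³)` via `(x,1,0) ↦ x`, satisfies: `S \ {T}` is a coset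
of a 2-dimensional `GF(q)`-subspace of `GF(q³)`; equivalently, there are `L ∈ GF(q³) \ {0}`
and `φ ∈ GF(q)` with `S \ {T} = {x : Lx + L^q x^q + L^{q²} x^{q²} + φ = 0}`;
i.e. `S` is a Sherk surface `S(0,0,L,φ)` of size `q²+1`. -/
theorem statement18 (q : ℕ) (F K : Type) [Field F] [Field K] [Fintype F] [Fintype K]
    [Algebra F K] (hF : Fintype.card F = q) (hK : Fintype.card K = q ^ 3)
    (S : Set (PGPoint K))
    (hS : IsTangentSplash F S (Projectivization.mk K ![1, 0, 0] vec_100_ne_zero)) :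
    (∃ L : K, L ≠ 0 ∧ ∃ φ : F, ∀ x : K,
        Projectivization.mk K ![x, 1, 0] (vec_x10_ne_zero x) ∈ S ↔
          L * x + L ^ q * x ^ q + L ^ q ^ 2 * x ^ q ^ 2 + algebraMap F K φ = 0) ∧
    (∃ W : Submodule F K, Module.finrank F W = 2 ∧ ∃ c : K,
        {x : K | Projectivization.mk K ![x, 1, 0] (vec_x10_ne_zero x) ∈ S} =
          (fun w => c + w) '' (W : Set K)) := by
  classical
  obtain ⟨π, ⟨f, hπ⟩, htan, hSsp⟩ := hS
  subst hSsp
  subst hπ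
  -- basic numerics
  have hq2 : 2 ≤ q := by rw [← hF]; exact Fintype.one_lt_card
  -- the q-power Frobenius
  obtain ⟨σ, hσ0⟩ := exists_powHom F K
  have hσ : ∀ x : K, σ x = x ^ q := by intro x; rw [hσ0, hF]
  have hσσ : ∀ y : K, σ (σ y) = y ^ q ^ 2 := by
    intro y
    rw [hσ (σ y), hσ y, ← pow_mul, ← sq]
  have hσ3 : ∀ x : K, σ (σ (σ x)) = x := by
    intro x
    rw [hσ (σ (σ x)), hσσ x, ← pow_mul]
    have h3 : q ^ 2 * q = q ^ 3 := by ring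
    rw [h3, ← hK]
    exact FiniteField.pow_card x
  have hfix_iff : ∀ x : K, σ x = x ↔ x ∈ (algebraMap F K).range := by
    intro x
    rw [hσ0]
    exact pow_card_eq_self_iff x
  have htrick : ∀ A B C : K, (∀ x : K, A * x + B * σ x + C * σ (σ x) = 0) →
      A = 0 ∧ B = 0 ∧ C = 0 := by
    intro A B C h
    refine poly_trick hq2 hK (fun x => ?_)
    have hx := h x
    rwa [hσσ x, hσ x] at hx
  -- the distinguished vectors
  set e0 : Fin 3 → K := ![1, 0, 0] with he0
  set e1 : Fin 3 → K := ![0, 1, 0] with he1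
  set u₀ : Fin 3 → K := f.symm e0 with hu₀
  set u₁ : Fin 3 → K := f.symm e1 with hu₁
  set v1 : Fin 3 → K := fun i => σ (u₁ i) with hv1
  set v2 : Fin 3 → K := fun i => σ (v1 i) with hv2
  have hv2σ : ∀ i, σ (v2 i) = u₁ i := fun i => hσ3 (u₁ i)
  have hindep01 : indep2 u₀ u₁ := by
    intro s t hst
    have hzero : s • u₀ + t • u₁ = 0 := by
      funext i
      have := hst i
      simpa using this
    have h2 := congrArg f hzero
    rw [map_add, map_smul, map_smul, hu₀, hu₁, LinearEquiv.apply_symm_apply,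
      LinearEquiv.apply_symm_apply, map_zero] at h2
    constructor
    · have := congrFun h2 0
      simpa [he0, he1] using this
    · have := congrFun h2 1
      simpa [he0, he1] using this
  have hu₀0 : u₀ ≠ 0 := hindep01.ne_zero_left
  have hu₁0 : u₁ ≠ 0 := hindep01.ne_zero_right
  -- tangency: T lies in the subplane
  set T : PGPoint K := Projectivization.mk K ![(1:K), 0, 0] vec_100_ne_zero with hT
  have hTmem : T ∈ (hmap f '' basePlane F K) ∩ linf K := by
    rw [htan]; exact rfl
  obtain ⟨Y, ⟨p₀, hp₀0, hYmk, hp₀rat⟩, hYT⟩ := hTmem.1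
  have hp₀fix : ∀ i, σ (p₀ i) = p₀ i := fun i => (hfix_iff _).mpr (hp₀rat i)
  rw [hYmk, hmap_mk_s18] at hYT
  rw [hT, Projectivization.mk_eq_mk_iff] at hYT
  obtain ⟨aT, haT⟩ := hYT
  have hp₀u : p₀ = (aT : K) • u₀ := by
    have h1 := congrArg f.symm haT
    rw [LinearEquiv.symm_apply_apply, Units.smul_def, map_smul] at h1
    rw [← h1]
  have hu₀p₀ : ∀ i, u₀ i = (aT : K)⁻¹ * p₀ i := by
    intro i
    have h1 : p₀ i = (aT : K) * u₀ i := by rw [hp₀u]; simp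
    rw [h1, ← mul_assoc, inv_mul_cancel₀ (Units.ne_zero aT), one_mul]
  set μ : K := σ ((aT : K)⁻¹) * (aT : K) with hμdef
  have hμ : ∀ i, σ (u₀ i) = μ * u₀ i := by
    intro i
    rw [hu₀p₀ i, map_mul, hp₀fix i, hμdef]
    have h2 : (aT : K) * (aT : K)⁻¹ = 1 := mul_inv_cancel₀ (Units.ne_zero aT)
    linear_combination (-(σ ((aT : K)⁻¹) * p₀ i)) * h2
  have hμ0 : μ ≠ 0 := by
    rw [hμdef]
    apply mul_ne_zero
    · intro h
      have h0 : (aT : K)⁻¹ = 0 := σ.injective (by rw [map_zero]; exact h)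
      exact inv_ne_zero (Units.ne_zero aT) h0
    · exact Units.ne_zero aT
  -- tangency fact: any σ-rational vector in the plane ⟨u₀,u₁⟩ is a multiple of u₀
  have hb : ∀ r : Fin 3 → K, (∀ i, σ (r i) = r i) → r ≠ 0 →
      ∀ α β : K, (∀ i, r i = α * u₀ i + β * u₁ i) → ∃ γ : K, ∀ i, r i = γ * u₀ i := by
    intro r hrfix hr0 α β hrcomb
    have hrrat : ∀ i, r i ∈ (algebraMap F K).range := fun i => (hfix_iff _).mp (hrfix i)
    have hfr0 : f r ≠ 0 := fun h => hr0 (by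
      have := congrArg f.symm h; simpa using this)
    have hfr : f r = α • e0 + β • e1 := by
      have : r = α • u₀ + β • u₁ := by
        funext i
        have := hrcomb i
        simpa using this
      rw [this, map_add, map_smul, map_smul, hu₀, hu₁, LinearEquiv.apply_symm_apply,
        LinearEquiv.apply_symm_apply]
    have hfr2 : f r 2 = 0 := by
      rw [hfr]
      simp [he0, he1]
    have hmem2 : Projectivization.mk K (f r) hfr0 ∈ (hmap f '' basePlane F K) ∩ linf K := by
      constructor
      · exact ⟨Projectivization.mk K r hr0, ⟨r, hr0, rfl, hrrat⟩, hmap_mk_s18 f r hr0⟩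
      · exact (mk_mem_linf_iff _ _).mpr hfr2
    rw [htan] at hmem2
    have hmem3 : Projectivization.mk K (f r) hfr0 = T := hmem2
    rw [hT, Projectivization.mk_eq_mk_iff] at hmem3
    obtain ⟨aR, haR⟩ := hmem3
    refine ⟨(aR : K), fun i => ?_⟩
    have h1 := congrArg f.symm haR
    rw [Units.smul_def, map_smul, LinearEquiv.symm_apply_apply] at h1
    have he0u : f.symm ![(1:K),0,0] = u₀ := rfl
    rw [he0u] at h1
    rw [← h1]
    simp
  -- the Sherk coefficients
  set L : K := det3 u₀ v1 v2 with hLdef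
  set φK : K := det3 u₁ v1 v2 with hφKdef
  have hσu₀ : (fun i => σ (u₀ i)) = fun i => μ * u₀ i := funext hμ
  have hσv1 : (fun i => σ (v1 i)) = v2 := rfl
  have hσv2 : (fun i => σ (v2 i)) = u₁ := funext hv2σ
  have hσu₁ : (fun i => σ (u₁ i)) = v1 := rfl
  have hLq : σ L = μ * det3 u₁ u₀ v2 := by
    rw [hLdef, det3_map σ, hσu₀, hσv1, hσv2]
    simp only [det3_expand]
    ring
  have hLqq : σ (σ L) = (σ μ * μ) * det3 u₁ v1 u₀ := by
    rw [hLq, map_mul, det3_map σ, hσu₁, hσu₀, hσv2]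
    simp only [det3_expand]
    ring
  have hφfix : σ φK = φK := by
    rw [hφKdef, det3_map σ, hσu₁, hσv1, hσv2]
    simp only [det3_expand]
    ring
  obtain ⟨φ, hφ⟩ := (hfix_iff φK).mp hφfix
  -- the determinant formula
  have hwx : ∀ (x : K) (i : Fin 3), f.symm ![x, 1, 0] i = x * u₀ i + u₁ i := by
    intro x i
    have hsplit : (![x, 1, 0] : Fin 3 → K) = x • e0 + e1 := by
      funext j
      fin_cases j <;> simp [he0, he1]
    rw [hsplit, map_add, map_smul, ← hu₀, ← hu₁]
    simp
  have hDet : ∀ x : K,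
      det3 (fun i => f.symm ![x, 1, 0] i) (fun i => σ (f.symm ![x, 1, 0] i))
        (fun i => σ (σ (f.symm ![x, 1, 0] i)))
      = L * x + σ L * σ x + σ (σ L) * σ (σ x) + φK := by
    intro x
    have hr0 : (fun i => f.symm ![x, 1, 0] i) = fun i => x * u₀ i + u₁ i :=
      funext (hwx x)
    have hr1 : (fun i => σ (f.symm ![x, 1, 0] i))
        = fun i => σ x * (μ * u₀ i) + v1 i := by
      funext i
      rw [hwx x i, map_add, map_mul, hμ i]
    have hr2 : (fun i => σ (σ (f.symm ![x, 1, 0] i)))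
        = fun i => σ (σ x) * ((σ μ * μ) * u₀ i) + v2 i := by
      funext i
      have : σ (f.symm ![x, 1, 0] i) = σ x * (μ * u₀ i) + v1 i := congrFun hr1 i
      rw [this, map_add, map_mul, map_mul, hμ i]
      have hv2i : σ (v1 i) = v2 i := rfl
      rw [hv2i]
      ring
    rw [hr0, hr1, hr2, det3_key, ← hLdef, ← hLq, ← hLqq, ← hφKdef]
    ring
  -- nonvanishing of L
  have hv10 : v1 ≠ 0 := by
    intro h
    apply hu₁0
    funext i
    have h1 : v1 i = 0 := by rw [h]; rfl
    have h2 : u₁ i = 0 := σ.injective (by rw [map_zero]; exact h1)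
    simpa using h2
  have hv20 : v2 ≠ 0 := by
    intro h
    apply hv10
    funext i
    have h1 : v2 i = 0 := by rw [h]; rfl
    have h2 : v1 i = 0 := σ.injective (by rw [map_zero]; exact h1)
    simpa using h2
  have hL0 : L ≠ 0 := by
    intro hL
    have hdepL : dep3 u₀ v1 v2 := (det3_eq_zero_iff_dep3 _ _ _).mp (by rw [← hLdef]; exact hL)
    by_cases hAcase : indep2 v1 v2
    · -- u₀ is a combination of v1, v2
      obtain ⟨xx, yy, zz, hnz, hsum⟩ := hdepL
      have hxx : xx ≠ 0 := by
        intro h0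
        subst h0
        have := hAcase yy zz (fun i => by
          have := hsum i; linear_combination this)
        exact hnz ⟨rfl, this.1, this.2⟩
      set a : K := -(xx⁻¹ * yy) with hadef
      set b : K := -(xx⁻¹ * zz) with hbdef
      have hu₀eq : ∀ i, u₀ i = a * v1 i + b * v2 i := by
        intro i
        have h2 : xx * u₀ i = -(yy * v1 i) - zz * v2 i := by linear_combination hsum i
        rw [hadef, hbdef]
        calc u₀ i = xx⁻¹ * (xx * u₀ i) := by
              rw [← mul_assoc, inv_mul_cancel₀ hxx, one_mul]
          _ = xx⁻¹ * (-(yy * v1 i) - zz * v2 i) := by rw [h2]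
          _ = -(xx⁻¹ * yy) * v1 i + -(xx⁻¹ * zz) * v2 i := by ring
      by_cases hBcase : dep3 u₁ v1 v2
      · -- case B1
        obtain ⟨al, be, ga, hnz2, hsum2⟩ := hBcase
        have hal : al ≠ 0 := by
          intro h0
          subst h0
          have := hAcase be ga (fun i => by
            have := hsum2 i; linear_combination this)
          exact hnz2 ⟨rfl, this.1, this.2⟩
        set β' : K := -(al⁻¹ * be) with hβ'def
        set γ' : K := -(al⁻¹ * ga) with hγ'def
        have hu₁eq : ∀ i, u₁ i = β' * v1 i + γ' * v2 i := by
          intro i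
          have h2 : al * u₁ i = -(be * v1 i) - ga * v2 i := by linear_combination hsum2 i
          rw [hβ'def, hγ'def]
          calc u₁ i = al⁻¹ * (al * u₁ i) := by
                rw [← mul_assoc, inv_mul_cancel₀ hal, one_mul]
            _ = al⁻¹ * (-(be * v1 i) - ga * v2 i) := by rw [h2]
            _ = -(al⁻¹ * be) * v1 i + -(al⁻¹ * ga) * v2 i := by ring
        obtain ⟨⟨e1c, f1c, hv1c⟩, ⟨e2c, f2c, hv2c⟩⟩ :=
          pair_inversion (fun i => (hu₀eq i)) (fun i => (hu₁eq i)) hindep01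
        set A : K → K := fun lam => lam * β' + σ lam with hAdef
        set B : K → K := fun lam => lam * γ' + σ (σ lam) with hBdef
        have hnz' : ∀ A₀ B₀ : K, (∀ lam : K, B₀ * A lam - A₀ * B lam = 0) →
            A₀ = 0 ∧ B₀ = 0 := by
          intro A₀ B₀ hlam
          have := htrick (B₀ * β' - A₀ * γ') B₀ (-A₀) (fun x => by
            have := hlam x
            rw [hAdef, hBdef] at this
            dsimp only at this
            linear_combination this)
          exact ⟨by linear_combination -this.2.2, this.2.1⟩
        obtain ⟨l, r, hlr⟩ := exists_indep_pair hAcase A B hnz'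
        have hform : ∀ (lam : K) i, A lam * v1 i + B lam * v2 i
            = lam * u₁ i + σ lam * v1 i + σ (σ lam) * v2 i := by
          intro lam i
          rw [hAdef, hBdef, hu₁eq i]
          dsimp only
          ring
        have hfixlam : ∀ (lam : K) i, σ (A lam * v1 i + B lam * v2 i)
            = A lam * v1 i + B lam * v2 i := by
          intro lam i
          rw [hform lam i]
          have h1 : σ (u₁ i) = v1 i := rfl
          have h2 : σ (v1 i) = v2 i := rfl
          simp only [map_add, map_mul, h1, h2, hv2σ i, hσ3]
          ring
        have hcomb : ∀ (lam : K) i, A lam * v1 i + B lam * v2 i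
            = (A lam * e1c + B lam * e2c) * u₀ i + (A lam * f1c + B lam * f2c) * u₁ i := by
          intro lam i
          rw [hv1c i, hv2c i]
          ring
        obtain ⟨γl, hγl⟩ := hb _ (hfixlam l) hlr.ne_zero_left _ _ (hcomb l)
        obtain ⟨γr, hγr⟩ := hb _ (hfixlam r) hlr.ne_zero_right _ _ (hcomb r)
        have hzz := hlr γr (-γl) (fun i => by
          have h1 := hγl i
          have h2 := hγr i
          dsimp only at h1 h2 ⊢
          linear_combination γr * h1 - γl * h2)
        have hγl0 : γl = 0 := by linear_combination -hzz.2
        apply hlr.ne_zero_left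
        funext i
        simp [hγl i, hγl0]
      · -- case B2
        have hgl1 : ∀ i, σ (u₀ i) = σ a * v2 i + σ b * u₁ i := by
          intro i
          rw [hu₀eq i, map_add, map_mul, map_mul]
          have h1 : σ (v1 i) = v2 i := rfl
          rw [h1, hv2σ i]
        have hu₀eq2 : ∀ i, u₀ i = (μ⁻¹ * σ b) * u₁ i + (μ⁻¹ * σ a) * v2 i := by
          intro i
          have h1 := hgl1 i
          rw [hμ i] at h1
          calc u₀ i = μ⁻¹ * (μ * u₀ i) := by
                rw [← mul_assoc, inv_mul_cancel₀ hμ0, one_mul]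
            _ = μ⁻¹ * (σ a * v2 i + σ b * u₁ i) := by rw [h1]
            _ = (μ⁻¹ * σ b) * u₁ i + (μ⁻¹ * σ a) * v2 i := by ring
        have hcomb1 : ∀ i, (-(μ⁻¹ * σ b)) * u₁ i + a * v1 i
            + (b - μ⁻¹ * σ a) * v2 i = 0 := by
          intro i
          linear_combination hu₀eq2 i - hu₀eq i
        have hall : -(μ⁻¹ * σ b) = 0 ∧ a = 0 ∧ (b - μ⁻¹ * σ a) = 0 := by
          by_contra hno
          exact hBcase ⟨_, _, _, hno, hcomb1⟩
        have ha0 : a = 0 := hall.2.1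
        have hb0 : b = 0 := by
          have h1 : μ⁻¹ * σ b = 0 := by linear_combination -hall.1
          rcases mul_eq_zero.mp h1 with h | h
          · exact absurd h (inv_ne_zero hμ0)
          · exact σ.injective (by rw [map_zero]; exact h)
        apply hu₀0
        funext i
        rw [hu₀eq i, ha0, hb0]
        simp
    · -- case A : v1, v2 dependent
      obtain ⟨c, hc⟩ := not_indep2 hAcase hv10
      have hc0 : c ≠ 0 := by
        intro h0
        apply hv20
        funext i
        simp [hc i, h0]
      have hu₁v1 : ∀ i, u₁ i = (σ c * c) * v1 i := by
        intro i
        have h1 : u₁ i = σ (v2 i) := (hv2σ i).symm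
        rw [h1, hc i, map_mul]
        have h2 : σ (v1 i) = v2 i := rfl
        rw [h2, hc i]
        ring
      have hd0 : σ c * c ≠ 0 := by
        apply mul_ne_zero _ hc0
        intro h
        exact hc0 (σ.injective (by rw [map_zero]; exact h))
      obtain ⟨k, hk⟩ : ∃ k, u₁ k ≠ 0 := by
        by_contra hcon
        push_neg at hcon
        exact hu₁0 (funext hcon)
      have hv1u₁ : ∀ i, σ (u₁ i) = (σ c * c)⁻¹ * u₁ i := by
        intro i
        have h1 : σ (u₁ i) = v1 i := rfl
        rw [h1]
        rw [hu₁v1 i, ← mul_assoc, inv_mul_cancel₀ hd0, one_mul]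
      have hrfix : ∀ i, σ ((u₁ k)⁻¹ * u₁ i) = (u₁ k)⁻¹ * u₁ i := by
        intro i
        rw [map_mul, map_inv₀, hv1u₁ i, hv1u₁ k]
        rw [mul_inv]
        have hσc : σ c ≠ 0 := left_ne_zero_of_mul hd0
        field_simp
      have hr0 : (fun i => (u₁ k)⁻¹ * u₁ i) ≠ (0 : Fin 3 → K) := by
        intro h
        have := congrFun h k
        dsimp at this
        rw [inv_mul_cancel₀ hk] at this
        exact one_ne_zero this
      obtain ⟨γ, hγ⟩ := hb _ hrfix hr0 0 ((u₁ k)⁻¹)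
        (fun i => by ring)
      have := hindep01 (-(u₁ k * γ)) 1 (fun i => by
        have h1 := hγ i
        have h2 : u₁ i = u₁ k * γ * u₀ i := by
          calc u₁ i = u₁ k * ((u₁ k)⁻¹ * u₁ i) := by
                rw [← mul_assoc, mul_inv_cancel₀ hk, one_mul]
            _ = u₁ k * (γ * u₀ i) := by rw [h1]
            _ = u₁ k * γ * u₀ i := by ring
        linear_combination h2)
      exact one_ne_zero this.2
  -- the main membership equivalence
  have hmain : ∀ x : K,
      Projectivization.mk K ![x, 1, 0] (vec_x10_ne_zero x) ∈ splash (hmap f '' basePlane F K)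
      ↔ L * x + L ^ q * x ^ q + L ^ q ^ 2 * x ^ q ^ 2 + algebraMap F K φ = 0 := by
    intro x
    have hLpow : L ^ q = σ L := (hσ L).symm
    have hLpow2 : L ^ q ^ 2 = σ (σ L) := (hσσ L).symm
    have hxpow : x ^ q = σ x := (hσ x).symm
    have hxpow2 : x ^ q ^ 2 = σ (σ x) := (hσσ x).symm
    constructor
    · intro hmem
      obtain ⟨v, v', hvrat, hv'rat, hind, α, β, hw⟩ := splash_forward f x hmem
      have hvfix : ∀ i, σ (v i) = v i := fun i => (hfix_iff _).mpr (hvrat i)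
      have hv'fix : ∀ i, σ (v' i) = v' i := fun i => (hfix_iff _).mpr (hv'rat i)
      have hdep : dep3 (fun i => f.symm ![x, 1, 0] i)
          (fun i => σ (f.symm ![x, 1, 0] i)) (fun i => σ (σ (f.symm ![x, 1, 0] i))) := by
        apply dep3_of_pair (p := v) (q := v')
        · exact ⟨α, β, hw⟩
        · refine ⟨σ α, σ β, fun i => ?_⟩
          rw [hw i, map_add, map_mul, map_mul, hvfix i, hv'fix i]
        · refine ⟨σ (σ α), σ (σ β), fun i => ?_⟩
          rw [hw i, map_add, map_mul, map_mul, hvfix i, hv'fix i,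
            map_add, map_mul, map_mul, hvfix i, hv'fix i]
      have hdet := (det3_eq_zero_iff_dep3 _ _ _).mpr hdep
      rw [hDet x] at hdet
      rw [hLpow, hLpow2, hxpow, hxpow2, hφ]
      exact hdet
    · intro heq
      rw [hLpow, hLpow2, hxpow, hxpow2, hφ] at heq
      have hdet : det3 (fun i => f.symm ![x, 1, 0] i)
          (fun i => σ (f.symm ![x, 1, 0] i))
          (fun i => σ (σ (f.symm ![x, 1, 0] i))) = 0 := by
        rw [hDet x]; exact heq
      have hw0 : f.symm ![x, 1, 0] ≠ 0 := fun h => vec_x10_ne_zero x (by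
        have := congrArg f h
        simpa using this)
      obtain ⟨p, p', hpfix, hp'fix, hind, α, β, hw⟩ :=
        descent σ hσ3 htrick (f.symm ![x, 1, 0]) hw0
          ((det3_eq_zero_iff_dep3 _ _ _).mp hdet)
      exact splash_reverse f x p p' (fun i => (hfix_iff _).mp (hpfix i))
        (fun i => (hfix_iff _).mp (hp'fix i)) hind α β hw
  refine ⟨⟨L, hL0, φ, hmain⟩, ?_⟩
  -- Part 2 : coset structure
  have hfixF : ∀ m : F, ∀ y : K, (algebraMap F K m * y) ^ q = algebraMap F K m * y ^ q := by
    intro m y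
    have hfm : σ (algebraMap F K m) = algebraMap F K m := (hfix_iff _).mpr ⟨m, rfl⟩
    rw [← hσ, ← hσ, map_mul, hfm]
  have hfixF2 : ∀ m : F, ∀ y : K,
      (algebraMap F K m * y) ^ q ^ 2 = algebraMap F K m * y ^ q ^ 2 := by
    intro m y
    have hfm : σ (algebraMap F K m) = algebraMap F K m := (hfix_iff _).mpr ⟨m, rfl⟩
    rw [← hσσ, ← hσσ, map_mul, map_mul, hfm, hfm]
  set ψ : K →ₗ[F] K :=
    { toFun := fun x => L * x + L ^ q * x ^ q + L ^ q ^ 2 * x ^ q ^ 2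
      map_add' := by
        intro x y
        have h1 : (x + y) ^ q = x ^ q + y ^ q := by
          rw [← hσ x, ← hσ y, ← hσ (x + y), map_add]
        have h2 : (x + y) ^ q ^ 2 = x ^ q ^ 2 + y ^ q ^ 2 := by
          rw [← hσσ, ← hσσ, ← hσσ, map_add, map_add]
        rw [h1, h2]
        ring
      map_smul' := by
        intro m x
        simp only [RingHom.id_apply, Algebra.smul_def]
        rw [hfixF m x, hfixF2 m x]
        ring } with hψdef
  have hψapp : ∀ y : K, ψ y = L * y + L ^ q * y ^ q + L ^ q ^ 2 * y ^ q ^ 2 :=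
    fun y => rfl
  have hLpow : L ^ q = σ L := (hσ L).symm
  have hLpow2 : L ^ q ^ 2 = σ (σ L) := (hσσ L).symm
  have hψfix : ∀ y : K, ψ y ∈ (algebraMap F K).range := by
    intro y
    apply (hfix_iff _).mp
    rw [hψapp, hLpow, hLpow2, ← hσ y, ← hσσ y]
    simp only [map_add, map_mul, hσ3]
    ring
  have hψne : ∃ y : K, ψ y ≠ 0 := by
    by_contra hcon
    push_neg at hcon
    have := poly_trick hq2 hK (A := L) (B := L ^ q) (C := L ^ q ^ 2)
      (fun y => by rw [← hψapp]; exact hcon y)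
    exact hL0 this.1
  set Fsub : Submodule F K := LinearMap.range (Algebra.linearMap F K) with hFsubdef
  have hFsub1 : Module.finrank F Fsub = 1 := by
    rw [LinearMap.finrank_range_of_inj, Module.finrank_self]
    intro a b hab
    exact (algebraMap F K).injective hab
  have hrange_le : LinearMap.range ψ ≤ Fsub := by
    rintro y ⟨z, rfl⟩
    obtain ⟨a, ha⟩ := hψfix z
    exact ⟨a, ha⟩
  have hfinK : Module.finrank F K = 3 := by
    have hcard := Module.card_eq_pow_finrank (K := F) (V := K)
    rw [hF, hK] at hcard
    exact (Nat.pow_right_injective hq2 hcard.symm)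
  have hrange_rank : Module.finrank F (LinearMap.range ψ) = 1 := by
    have hle : Module.finrank F (LinearMap.range ψ) ≤ 1 := by
      have := Submodule.finrank_mono hrange_le
      rwa [hFsub1] at this
    have hne : Module.finrank F (LinearMap.range ψ) ≠ 0 := by
      intro h0
      rw [Submodule.finrank_eq_zero] at h0
      obtain ⟨y, hy⟩ := hψne
      apply hy
      have : ψ y ∈ LinearMap.range ψ := ⟨y, rfl⟩
      rw [h0] at this
      exact this
    omega
  have hrange_eq : LinearMap.range ψ = Fsub :=
    Submodule.eq_of_le_of_finrank_le hrange_le (by rw [hFsub1, hrange_rank])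
  have hker : Module.finrank F (LinearMap.ker ψ) = 2 := by
    have := LinearMap.finrank_range_add_finrank_ker ψ
    rw [hfinK, hrange_rank] at this
    omega
  have hmemrange : -(algebraMap F K φ) ∈ LinearMap.range ψ := by
    rw [hrange_eq]
    exact ⟨-φ, by rw [Algebra.linearMap_apply, map_neg]⟩
  obtain ⟨c, hc⟩ := hmemrange
  refine ⟨LinearMap.ker ψ, hker, c, ?_⟩
  ext x
  simp only [Set.mem_setOf_eq, Set.mem_image, SetLike.mem_coe]
  rw [hmain x]
  constructor
  · intro hx
    refine ⟨x - c, ?_, by ring⟩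
    rw [LinearMap.mem_ker, map_sub, hc]
    have hx' : ψ x = -(algebraMap F K φ) := by
      rw [hψapp]
      linear_combination hx
    rw [hx']
    ring
  · rintro ⟨y, hy, rfl⟩
    have h1 : ψ (c + y) = -(algebraMap F K φ) := by
      rw [map_add, hc, LinearMap.mem_ker.mp hy, add_zero]
    rw [hψapp] at h1
    linear_combination h1


end TangentSplashPaper
end
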